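/- Let Γ be a measurable subset of [-1,1] with positive Lebesgue measure. Then there exists an integer l ≥ 0 with 2^{-l} ≥ c·Leb(Γ) for an absolute constant c > 0, such that the set S = {t ∈ [0, 2^{-l}) : the arithmetic progression t + ℤ·2^{-l} meets Γ in at least 2 points} has Lebesgue measure at least c'·Leb(Γ)/(1 + |log Leb(Γ)|) for an absolute constant c' > 0. -/

import Mathlib

open MeasureTheory Set

noncomputable def eps (l : ℕ) : ℝ := ((2:ℝ)^l)⁻¹

lemma eps_pos (l : ℕ) : 0 < eps l := by unfold eps; positivity

lemma eps_succ (l : ℕ) : eps l = 2 * eps (l+1) := by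
  unfold eps; rw [pow_succ]; field_simp

lemma eps_antitone {l L : ℕ} (h : l ≤ L) : eps L ≤ eps l := by
  unfold eps
  exact inv_anti₀ (by positivity) (pow_le_pow_right₀ (by norm_num) h)

def Aset (Γ : Set ℝ) (l : ℕ) : Set ℝ :=
  {t | t ∈ Ico (0:ℝ) (eps l) ∧ ∃ j : ℤ, t + (j:ℝ) * eps l ∈ Γ}

def Sset (Γ : Set ℝ) (l : ℕ) : Set ℝ :=
  {t | t ∈ Ico (0:ℝ) (eps l) ∧ ∃ j j' : ℤ, j ≠ j' ∧
    t + (j:ℝ) * eps l ∈ Γ ∧ t + (j':ℝ) * eps l ∈ Γ}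

lemma Aset_meas {Γ : Set ℝ} (hΓ : MeasurableSet Γ) (l : ℕ) :
    MeasurableSet (Aset Γ l) := by
  have : Aset Γ l = Ico (0:ℝ) (eps l) ∩ ⋃ j : ℤ, (· + (j:ℝ) * eps l) ⁻¹' Γ := by
    ext t; simp [Aset]
  rw [this]
  exact measurableSet_Ico.inter <| MeasurableSet.iUnion fun j =>
    (measurable_add_const _) hΓ

lemma Sset_meas {Γ : Set ℝ} (hΓ : MeasurableSet Γ) (l : ℕ) :
    MeasurableSet (Sset Γ l) := by
  have : Sset Γ l = Ico (0:ℝ) (eps l) ∩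
      ⋃ j : ℤ, ⋃ j' : ℤ, ⋃ (_ : j ≠ j'),
        ((· + (j:ℝ) * eps l) ⁻¹' Γ ∩ (· + (j':ℝ) * eps l) ⁻¹' Γ) := by
    ext t; simp [Sset]; tauto
  rw [this]
  exact measurableSet_Ico.inter <| MeasurableSet.iUnion fun j =>
    MeasurableSet.iUnion fun j' => MeasurableSet.iUnion fun _ =>
      ((measurable_add_const _) hΓ).inter ((measurable_add_const _) hΓ)

/-- folding step -/
lemma fold {Γ : Set ℝ} (hΓ : MeasurableSet Γ) (l : ℕ) :
    volume (Aset Γ l) ≤ volume (Aset Γ (l+1)) + volume (Sset Γ (l+1)) := by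
  set h := eps (l+1) with hh
  have hpos : 0 < h := eps_pos _
  have h2 : eps l = 2 * h := eps_succ l
  set B1 : Set ℝ := Aset Γ l ∩ Ico 0 h with hB1
  set C : Set ℝ := Aset Γ l ∩ Ico h (2*h) with hC
  set B2 : Set ℝ := (· + h) ⁻¹' C with hB2
  have hsplit : Aset Γ l ⊆ B1 ∪ C := by
    intro t ht
    have htIco : t ∈ Ico 0 (2*h) := by rw [← h2]; exact ht.1
    rcases lt_or_ge t h with hlt | hge
    · exact Or.inl ⟨ht, htIco.1, hlt⟩
    · exact Or.inr ⟨ht, hge, htIco.2⟩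
  have hCmeas : MeasurableSet C := (Aset_meas hΓ l).inter measurableSet_Ico
  have hB2meas : MeasurableSet B2 := (measurable_add_const h) hCmeas
  have hvolC : volume C = volume B2 := (measure_preimage_add_right volume h C).symm
  have hB1sub : B1 ⊆ Aset Γ (l+1) := by
    rintro t ⟨⟨htI, j, hj⟩, ht0, hth⟩
    refine ⟨⟨ht0, hth⟩, 2*j, ?_⟩
    have : ((2*j : ℤ) : ℝ) * eps (l+1) = (j:ℝ) * eps l := by
      rw [h2]; push_cast; ring
    rw [this]; exact hj
  have hB2sub : B2 ⊆ Aset Γ (l+1) := by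
    intro t ht
    simp only [hB2, mem_preimage] at ht
    obtain ⟨⟨htI, j, hj⟩, ht1, ht2⟩ := ht
    refine ⟨⟨by dsimp [h] at *; linarith, by dsimp [h] at *; linarith⟩, 2*j+1, ?_⟩
    have : t + ((2*j+1 : ℤ) : ℝ) * eps (l+1) = t + h + (j:ℝ) * eps l := by
      rw [h2]; push_cast; ring
    rw [this]; exact hj
  have hintersub : B1 ∩ B2 ⊆ Sset Γ (l+1) := by
    intro t ht
    obtain ⟨ht1', ht2'⟩ := ht
    obtain ⟨⟨htI, j, hj⟩, ht0, hth⟩ := ht1'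
    simp only [hB2, mem_preimage] at ht2'
    obtain ⟨⟨htI', j', hj'⟩, ht1, ht2⟩ := ht2'
    refine ⟨⟨ht0, hth⟩, 2*j, 2*j'+1, by omega, ?_, ?_⟩
    · have : ((2*j : ℤ) : ℝ) * eps (l+1) = (j:ℝ) * eps l := by
        rw [h2]; push_cast; ring
      rw [this]; exact hj
    · have : t + ((2*j'+1 : ℤ) : ℝ) * eps (l+1) = t + h + (j':ℝ) * eps l := by
        rw [h2]; push_cast; ring
      rw [this]; exact hj'
  calc volume (Aset Γ l) ≤ volume (B1 ∪ C) := measure_mono hsplit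
    _ ≤ volume B1 + volume C := measure_union_le _ _
    _ = volume B1 + volume B2 := by rw [hvolC]
    _ = volume (B1 ∪ B2) + volume (B1 ∩ B2) := (measure_union_add_inter B1 hB2meas).symm
    _ ≤ volume (Aset Γ (l+1)) + volume (Sset Γ (l+1)) :=
        add_le_add (measure_mono (union_subset hB1sub hB2sub)) (measure_mono hintersub)

lemma A0_big {Γ : Set ℝ} (hsub : Γ ⊆ Icc (-1) 1) :
    volume Γ ≤ 2 * volume (Aset Γ 0) := by
  have heps0 : eps 0 = 1 := by unfold eps; norm_num
  have hsplit : Γ ⊆ (Γ ∩ Ico (-1) 0) ∪ (Γ ∩ Ico 0 1) ∪ (Γ ∩ {(1:ℝ)}) := by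
    intro x hx
    rcases hsub hx with ⟨h1, h2⟩
    rcases lt_or_ge x 0 with h | h
    · exact Or.inl (Or.inl ⟨hx, h1, h⟩)
    · rcases lt_or_eq_of_le h2 with h' | h'
      · exact Or.inl (Or.inr ⟨hx, h, h'⟩)
      · exact Or.inr ⟨hx, h'⟩
  have h1 : volume (Γ ∩ Ico (0:ℝ) 1) ≤ volume (Aset Γ 0) := by
    apply measure_mono
    rintro x ⟨hx, hI⟩
    exact ⟨by rwa [heps0], 0, by simpa using hx⟩
  have h2 : volume (Γ ∩ Ico (-1:ℝ) 0) ≤ volume (Aset Γ 0) := by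
    have : Γ ∩ Ico (-1:ℝ) 0 = (· + (-1:ℝ)) ⁻¹' (Aset Γ 0) ∩ Ico (-1 : ℝ) 0 ∪ ∅ → True := fun _ => trivial
    -- translate: x ∈ Γ ∩ Ico (-1) 0 ↦ x + 1 ∈ Aset Γ 0
    have key : Γ ∩ Ico (-1:ℝ) 0 ⊆ (· + (1:ℝ)) ⁻¹' (Aset Γ 0) := by
      rintro x ⟨hx, hI1, hI2⟩
      show x + 1 ∈ Aset Γ 0
      refine ⟨⟨by linarith, by rw [heps0]; linarith⟩, -1, ?_⟩
      rw [heps0]; push_cast; ring_nf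
      simpa using hx
    calc volume (Γ ∩ Ico (-1:ℝ) 0) ≤ volume ((· + (1:ℝ)) ⁻¹' (Aset Γ 0)) := measure_mono key
      _ = volume (Aset Γ 0) := measure_preimage_add_right volume 1 _
  calc volume Γ ≤ volume ((Γ ∩ Ico (-1) 0) ∪ (Γ ∩ Ico 0 1) ∪ (Γ ∩ {(1:ℝ)})) := measure_mono hsplit
    _ ≤ volume (Γ ∩ Ico (-1) 0) + volume (Γ ∩ Ico 0 1) + volume (Γ ∩ {(1:ℝ)}) := by
        refine le_trans (measure_union_le _ _) ?_
        exact add_le_add (measure_union_le _ _) le_rfl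
    _ ≤ volume (Aset Γ 0) + volume (Aset Γ 0) + 0 := by
        refine add_le_add (add_le_add h2 h1) ?_
        refine le_of_eq (measure_mono_null (inter_subset_right) ?_)
        simp
    _ = 2 * volume (Aset Γ 0) := by ring

theorem stmt_0 :
    ∃ c > (0:ℝ), ∃ c' > (0:ℝ), ∀ Γ : Set ℝ, Γ ⊆ Icc (-1) 1 → MeasurableSet Γ →
      0 < volume Γ →
      ∃ l : ℕ,
        c * (volume Γ).toReal ≤ (2:ℝ) ^ (-(l:ℝ)) ∧
        c' * (volume Γ).toReal / (1 + |Real.log ((volume Γ).toReal)|) ≤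
          (volume {t : ℝ | t ∈ Ico (0:ℝ) ((2:ℝ) ^ (-(l:ℝ))) ∧
            ∃ j j' : ℤ, j ≠ j' ∧ t + (j:ℝ) * (2:ℝ) ^ (-(l:ℝ)) ∈ Γ ∧
              t + (j':ℝ) * (2:ℝ) ^ (-(l:ℝ)) ∈ Γ}).toReal := by
  classical
  refine ⟨1/8, by norm_num, 1/12, by norm_num, ?_⟩
  intro Γ hsub hΓ hpos
  have hrpow : ∀ n : ℕ, (2:ℝ) ^ (-(n:ℝ)) = eps n := by
    intro n
    rw [Real.rpow_neg (by norm_num), Real.rpow_natCast]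
    rfl
  simp only [hrpow]
  have hfin : volume Γ ≠ ⊤ := by
    refine ne_top_of_le_ne_top ?_ (measure_mono hsub)
    simp [Real.volume_Icc]
  set m := (volume Γ).toReal with hm
  have hm0 : 0 < m := ENNReal.toReal_pos hpos.ne' hfin
  have hm2 : m ≤ 2 := by
    have h1 : volume Γ ≤ volume (Icc (-1:ℝ) 1) := measure_mono hsub
    have h2 : volume (Icc (-1:ℝ) 1) = ENNReal.ofReal 2 := by
      rw [Real.volume_Icc]; norm_num
    calc m ≤ (volume (Icc (-1:ℝ) 1)).toReal :=
          ENNReal.toReal_le_toReal hfin (by simp [h2]) |>.mpr h1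
      _ = 2 := by rw [h2]; simp
  -- finiteness of the auxiliary sets
  have hAfin : ∀ n, volume (Aset Γ n) ≠ ⊤ := by
    intro n
    refine ne_top_of_le_ne_top ?_ (measure_mono (fun t ht => ht.1))
    simp [Real.volume_Ico]
  have hSfin : ∀ n, volume (Sset Γ n) ≠ ⊤ := by
    intro n
    refine ne_top_of_le_ne_top ?_ (measure_mono (fun t ht => ht.1))
    simp [Real.volume_Ico]
  set a : ℕ → ℝ := fun n => (volume (Aset Γ n)).toReal with ha
  set s : ℕ → ℝ := fun n => (volume (Sset Γ n)).toReal with hs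
  have hs0 : ∀ n, 0 ≤ s n := fun n => ENNReal.toReal_nonneg
  have hfold : ∀ n, a n ≤ a (n+1) + s (n+1) := by
    intro n
    have := fold hΓ n
    have h2 : (volume (Aset Γ (n+1)) + volume (Sset Γ (n+1))).toReal
        = a (n+1) + s (n+1) := ENNReal.toReal_add (hAfin _) (hSfin _)
    rw [← h2]
    exact ENNReal.toReal_le_toReal (hAfin _)
      (ENNReal.add_ne_top.2 ⟨hAfin _, hSfin _⟩) |>.mpr this
  have ha0 : m ≤ 2 * a 0 := by
    have := A0_big hsub
    calc m ≤ (2 * volume (Aset Γ 0)).toReal :=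
        ENNReal.toReal_le_toReal hfin
          (ENNReal.mul_ne_top (by norm_num) (hAfin 0)) |>.mpr this
      _ = 2 * a 0 := by rw [ENNReal.toReal_mul]; norm_num; rfl
  have haeps : ∀ n, a n ≤ eps n := by
    intro n
    have h1 : volume (Aset Γ n) ≤ ENNReal.ofReal (eps n) := by
      calc volume (Aset Γ n) ≤ volume (Ico (0:ℝ) (eps n)) :=
            measure_mono (fun t ht => ht.1)
        _ = ENNReal.ofReal (eps n) := by rw [Real.volume_Ico]; simp
    calc a n ≤ (ENNReal.ofReal (eps n)).toReal :=
        ENNReal.toReal_le_toReal (hAfin n) ENNReal.ofReal_ne_top |>.mpr h1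
      _ = eps n := ENNReal.toReal_ofReal (eps_pos n).le
  have htel : ∀ n, a 0 ≤ a n + ∑ i ∈ Finset.range n, s (i+1) := by
    intro n
    induction n with
    | zero => simp
    | succ k ih =>
      rw [Finset.sum_range_succ]
      calc a 0 ≤ a k + ∑ i ∈ Finset.range k, s (i+1) := ih
        _ ≤ (a (k+1) + s (k+1)) + ∑ i ∈ Finset.range k, s (i+1) :=
            add_le_add (hfold k) le_rfl
        _ = a (k+1) + (∑ i ∈ Finset.range k, s (i+1) + s (k+1)) := by ring
  -- choose L
  have hex : ∃ n, eps n ≤ m/4 := by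
    obtain ⟨n, hn⟩ := exists_pow_lt_of_lt_one (by linarith : (0:ℝ) < m/4)
      (by norm_num : (1/2:ℝ) < 1)
    refine ⟨n, ?_⟩
    have : eps n = (1/2:ℝ)^n := by
      unfold eps; rw [← inv_pow]; norm_num
    rw [this]; exact hn.le
  set L := Nat.find hex with hL
  have hLspec : eps L ≤ m/4 := Nat.find_spec hex
  have hL1 : 1 ≤ L := by
    rcases Nat.eq_zero_or_pos L with h0 | h1
    · exfalso
      have := hLspec
      rw [h0] at this
      have : (1:ℝ) ≤ m/4 := by simpa [eps] using this
      linarith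
    · exact h1
  have hLpred : m/4 < eps (L-1) := by
    have := Nat.find_min hex (m := L - 1) (by omega)
    push_neg at this
    exact this
  have hepsL : m/8 < eps L := by
    have h2 : eps (L-1) = 2 * eps L := by
      have : L - 1 + 1 = L := by omega
      rw [← this]; exact eps_succ (L-1)
    linarith
  -- sum over S is large
  have hsum : m/4 ≤ ∑ i ∈ Finset.range L, s (i+1) := by
    have h1 := htel L
    have h2 : a L ≤ m/4 := (haeps L).trans hLspec
    linarith
  -- pigeonhole
  have hpig : ∃ i ∈ Finset.range L, m/(4*L) ≤ s (i+1) := by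
    have hne : (Finset.range L).Nonempty := ⟨0, Finset.mem_range.2 (by omega)⟩
    refine Finset.exists_le_of_sum_le hne ?_
    calc ∑ _i ∈ Finset.range L, m/(4*L) = L * (m/(4*L)) := by
          rw [Finset.sum_const, Finset.card_range]; simp [nsmul_eq_mul]
      _ = m/4 := by
          field_simp
      _ ≤ ∑ i ∈ Finset.range L, s (i+1) := hsum
  obtain ⟨i, hiL, hsi⟩ := hpig
  have hiL' : i + 1 ≤ L := Finset.mem_range.1 hiL
  refine ⟨i + 1, ?_, ?_⟩
  · -- c bound
    have h1 : eps L ≤ eps (i+1) := eps_antitone hiL'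
    calc 1/8 * m ≤ eps L := by linarith
      _ ≤ eps (i+1) := h1
  · -- c' bound
    -- bound on L via logs
    have hlog2 : (0.6931471803:ℝ) < Real.log 2 := Real.log_two_gt_d9
    have hLbound : (L:ℝ) ≤ 3 + 3 * |Real.log m| := by
      have h1 : Real.log (m/4) < Real.log (eps (L-1)) :=
        Real.log_lt_log (by linarith) hLpred
      have h2 : Real.log (eps (L-1)) = -((L:ℝ)-1) * Real.log 2 := by
        unfold eps
        rw [Real.log_inv, Real.log_pow]
        have : ((L-1 : ℕ) : ℝ) = (L:ℝ) - 1 := by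
          push_cast [Nat.cast_sub hL1]; ring
        rw [this]; ring
      have h3 : Real.log (m/4) = Real.log m - 2 * Real.log 2 := by
        rw [Real.log_div hm0.ne' (by norm_num)]
        have : Real.log 4 = 2 * Real.log 2 := by
          rw [show (4:ℝ) = 2^2 by norm_num, Real.log_pow]; push_cast; ring
        rw [this]
      rw [h2, h3] at h1
      -- (L-1) * log 2 < 2 * log 2 - log m ≤ 2 log 2 + |log m|
      have h4 : ((L:ℝ)-1) * Real.log 2 ≤ 2 * Real.log 2 + |Real.log m| := by
        have := neg_abs_le (Real.log m)
        nlinarith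
      have h5 : |Real.log m| ≥ 0 := abs_nonneg _
      nlinarith
    have habs : (0:ℝ) < 1 + |Real.log m| := by positivity
    have hLpos : (0:ℝ) < (L:ℝ) := by exact_mod_cast hL1
    have key : 1/12 * m / (1 + |Real.log m|) ≤ m / (4*L) := by
      rw [div_le_div_iff₀ habs (by positivity)]
      nlinarith [abs_nonneg (Real.log m)]
    have hset : {t : ℝ | t ∈ Ico (0:ℝ) (eps (i+1)) ∧
        ∃ j j' : ℤ, j ≠ j' ∧ t + (j:ℝ) * eps (i+1) ∈ Γ ∧
          t + (j':ℝ) * eps (i+1) ∈ Γ} = Sset Γ (i+1) := rfl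
    rw [hset]
    calc 1/12 * m / (1 + |Real.log m|) ≤ m / (4*L) := key
      _ = m / (4*L) := rfl
      _ ≤ s (i+1) := by
          have : m/(4*(L:ℝ)) = m/(4*L) := rfl
          exact hsi
      _ = (volume (Sset Γ (i+1))).toReal := rfl
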